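/- Let q be real with 0 < q < 1, let r, m be integers with 1 < m ≤ r, and let θ : (ℂ∖{0})^r → ℂ be a multiple theta function θ(a) = ∏_{i=1}^m [(−1)^{δ_i} a^{γ_i} q^{z_i}; q^{t_i}]_∞ with δ_i ∈ {0,1}, exponent vectors γ_1, …, γ_m ∈ ℤ^r linearly independent over ℚ, z_i ∈ ℚ and t_i ∈ ℚ_{>0}. Let U_θ ⊆ ℚ^r be the ℚ-linear span of {γ_1, …, γ_m}, and let V_θ ⊆ ℚ^r be the ℚ-linear span of the set of all w ∈ ℤ^r for which there exist α ∈ ℤ^r, ρ ∈ {0,1} and s ∈ ℚ such that θ(a_1 q^{α_1}, …, a_r q^{α_r}) = (−1)^ρ · a^{−w} · q^{−s} · θ(a) for all a ∈ (ℂ∖{0})^r. Then U_θ = V_θ. -/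

import Mathlib

/-- The q-Pochhammer symbol of infinite order: `(x; Q)_∞ = ∏_{k=0}^∞ (1 - x Q^k)`. -/
noncomputable def qPoch (x Q : ℂ) : ℂ := ∏' k : ℕ, (1 - x * Q ^ k)

/-- The theta function `[x; Q]_∞ = (x;Q)_∞ (Q/x;Q)_∞`. -/
noncomputable def theta (x Q : ℂ) : ℂ := qPoch x Q * qPoch (Q / x) Q

/-- The multiple theta function
`θ(a) = ∏_{i=1}^m [(-1)^{δ_i} a^{γ_i} q^{z_i}; q^{t_i}]_∞`. -/
noncomputable def mtheta (q : ℝ) {r m : ℕ} (δ : Fin m → ℕ) (γ : Fin m → Fin r → ℤ)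
    (z t : Fin m → ℚ) (a : Fin r → ℂ) : ℂ :=
  ∏ i, theta ((-1 : ℂ) ^ (δ i) * (∏ j, a j ^ (γ i j)) * ((q ^ ((z i : ℝ)) : ℝ) : ℂ))
    ((q ^ ((t i : ℝ)) : ℝ) : ℂ)

open Complex

set_option maxHeartbeats 1000000

lemma multQ {x Q : ℂ} (hQ : ‖Q‖ < 1) : Multipliable (fun k : ℕ => 1 - x * Q ^ k) := by
  by_cases hz : ∃ k0, 1 - x * Q ^ k0 = 0
  · obtain ⟨k0, hk0⟩ := hz
    refine ⟨0, ?_⟩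
    have hev : ∀ᶠ s : Finset ℕ in Filter.atTop, (∏ k ∈ s, (1 - x * Q ^ k)) = 0 := by
      filter_upwards [Filter.eventually_ge_atTop {k0}] with s hs
      exact Finset.prod_eq_zero (hs (Finset.mem_singleton_self k0)) hk0
    exact Filter.Tendsto.congr' (Filter.EventuallyEq.symm hev) tendsto_const_nhds
  · push_neg at hz
    have hsum : Summable (fun k : ℕ => Complex.log (1 - x * Q ^ k)) := by
      obtain ⟨K, hK⟩ : ∃ K : ℕ, ∀ k ≥ K, ‖x * Q ^ k‖ ≤ 1/2 := by
        have h0 : Filter.Tendsto (fun k : ℕ => ‖x‖ * ‖Q‖ ^ k) Filter.atTop (nhds 0) := by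
          simpa using (tendsto_pow_atTop_nhds_zero_of_lt_one (norm_nonneg Q) hQ).const_mul ‖x‖
        have := h0.eventually (ge_mem_nhds (by norm_num : (0:ℝ) < 1/2))
        rw [Filter.eventually_atTop] at this
        obtain ⟨K, hK⟩ := this
        exact ⟨K, fun k hk => by simpa [norm_mul, norm_pow] using hK k hk⟩
      rw [← summable_nat_add_iff K]
      have hgeo : Summable (fun k : ℕ => (3/2) * (‖x‖ * ‖Q‖^K) * ‖Q‖ ^ k) :=
        (summable_geometric_of_lt_one (norm_nonneg Q) hQ).mul_left _
      refine Summable.of_norm_bounded hgeo ?_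
      intro k
      have h1 : ‖-(x * Q ^ (k + K))‖ ≤ 1/2 := by
        simpa using hK (k + K) (Nat.le_add_left K k)
      have h2 := Complex.norm_log_one_add_half_le_self h1
      rw [show (1 : ℂ) + -(x * Q ^ (k+K)) = 1 - x * Q ^ (k+K) by ring] at h2
      refine h2.trans ?_
      rw [norm_neg, norm_mul, norm_pow, pow_add]
      ring_nf
      apply le_refl
    exact Complex.multipliable_of_summable_log hsum

lemma qPoch_shift {x Q : ℂ} (hQ : ‖Q‖ < 1) : qPoch x Q = (1 - x) * qPoch (x * Q) Q := by
  have h : Multipliable (fun k : ℕ => 1 - (x * Q) * Q ^ k) := multQ hQ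
  have h' : Multipliable (fun k : ℕ => 1 - x * Q ^ (k + 1)) := by
    apply h.congr; intro k; rw [pow_succ]; ring
  unfold qPoch
  rw [tprod_eq_zero_mul' h']
  congr 1
  · simp
  · exact tprod_congr fun k => by rw [pow_succ]; ring

lemma theta_shift {x Q : ℂ} (hQ : ‖Q‖ < 1) (hQ0 : Q ≠ 0) (hx : x ≠ 0) :
    theta (Q * x) Q = -x⁻¹ * theta x Q := by
  unfold theta
  have e1 : Q / (Q * x) = x⁻¹ := by field_simp
  have e2 : Q / x = x⁻¹ * Q := by rw [div_eq_mul_inv]; ring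
  rw [e1, e2, qPoch_shift (x := x⁻¹) hQ, qPoch_shift (x := x) hQ, mul_comm Q x]
  have e3 : (1 - x⁻¹) = -x⁻¹ * (1 - x) := by
    rw [neg_mul, mul_sub, mul_one, inv_mul_cancel₀ hx]; ring
  rw [e3]; ring

lemma theta_pow (n : ℕ) {x Q : ℂ} (hQ : ‖Q‖ < 1) (hQ0 : Q ≠ 0) (hx : x ≠ 0) :
    theta (Q ^ n * x) Q = (-1)^n * (x⁻¹)^n * (Q⁻¹)^(n*(n-1)/2) * theta x Q := by
  induction n with
  | zero => simp
  | succ n ih =>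
    have hQnx : Q ^ n * x ≠ 0 := mul_ne_zero (pow_ne_zero _ hQ0) hx
    have h1 : Q ^ (n+1) * x = Q * (Q ^ n * x) := by ring
    have h2 : (n+1)*((n+1)-1) = n*(n-1) + 2*n := by
      cases n with
      | zero => rfl
      | succ p => simp [Nat.add_sub_cancel]; ring
    have hee : (n+1)*((n+1)-1)/2 = n*(n-1)/2 + n := by omega
    rw [h1, theta_shift hQ hQ0 hQnx, ih, hee, mul_inv, ← inv_pow, pow_add]
    ring

def SS : Set ℂ := {z : ℂ | 1 ≤ z.re ∧ z.im = 0}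

lemma SS_mul {a b : ℂ} (ha : a ∈ SS) (hb : b ∈ SS) : a * b ∈ SS := by
  obtain ⟨ha1, ha2⟩ := ha; obtain ⟨hb1, hb2⟩ := hb
  constructor
  · simp only [Complex.mul_re, ha2, hb2]; nlinarith
  · simp [Complex.mul_im, ha2, hb2]

lemma SS_one : (1 : ℂ) ∈ SS := by constructor <;> simp

lemma SS_closed : IsClosed SS := by
  have : SS = (Complex.re ⁻¹' Set.Ici 1) ∩ (Complex.im ⁻¹' {0}) := by
    ext z; simp [SS, Set.mem_Ici]
  rw [this]
  exact (isClosed_Ici.preimage Complex.continuous_re).inter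
    (isClosed_singleton.preimage Complex.continuous_im)

lemma tprod_mem_SS (f : ℕ → ℂ) (hf : ∀ k, f k ∈ SS) : (∏' k, f k) ∈ SS := by
  by_cases hm : Multipliable f
  · refine SS_closed.mem_of_tendsto hm.hasProd ?_
    filter_upwards with s
    exact Finset.prod_induction f (· ∈ SS) (fun _ _ => SS_mul) SS_one (fun k _ => hf k)
  · rw [tprod_eq_one_of_not_multipliable hm]; exact SS_one

lemma SS_ne_zero {z : ℂ} (hz : z ∈ SS) : z ≠ 0 := by
  intro h
  obtain ⟨h1, -⟩ := hz
  rw [h, Complex.zero_re] at h1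
  linarith

lemma qPoch_neg_mem {c Qr : ℝ} (hc : 0 ≤ c) (hQ : 0 ≤ Qr) :
    qPoch (-(c:ℂ)) (Qr:ℂ) ∈ SS := by
  apply tprod_mem_SS
  intro k
  have h : (1 : ℂ) - (-(c:ℂ)) * (Qr:ℂ) ^ k = ((1 + c * Qr ^ k : ℝ) : ℂ) := by
    push_cast; ring
  rw [h]
  refine ⟨?_, Complex.ofReal_im _⟩
  rw [Complex.ofReal_re]
  have : 0 ≤ c * Qr ^ k := by positivity
  linarith

lemma theta_neg_one_ne_zero {Qr : ℝ} (hQ0 : 0 ≤ Qr) : theta (-1 : ℂ) (Qr:ℂ) ≠ 0 := by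
  unfold theta
  have h2 : (Qr:ℂ) / (-1 : ℂ) = -((Qr:ℝ):ℂ) := by rw [div_neg, div_one]
  have h1 : ((-1 : ℂ)) = -((1:ℝ):ℂ) := by norm_num
  rw [h2, h1]
  exact SS_ne_zero (SS_mul (qPoch_neg_mem zero_le_one hQ0) (qPoch_neg_mem hQ0 hQ0))

lemma dual_apply {r : ℕ} (f : Module.Dual ℚ (Fin r → ℚ)) (x : Fin r → ℚ) :
    f x = ∑ j, x j * f (fun j' => if j = j' then 1 else 0) := by
  conv_lhs => rw [pi_eq_sum_univ x]
  rw [map_sum]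
  exact Finset.sum_congr rfl fun j _ => by rw [map_smul, smul_eq_mul]

lemma exists_dual_system {r m : ℕ} (γq : Fin m → Fin r → ℚ) (hγ : LinearIndependent ℚ γq) :
    ∃ v : Fin m → Fin r → ℚ, ∀ i k, (∑ j, γq i j * v k j) = if i = k then 1 else 0 := by
  have hchoice : ∀ k : Fin m, ∃ vk : Fin r → ℚ,
      ∀ i, ∑ j, γq i j * vk j = if i = k then 1 else 0 := by
    intro k
    have hnot : γq k ∉ Submodule.span ℚ (γq '' {i | i ≠ k}) :=
      hγ.notMem_span_image (by simp)
    obtain ⟨f, hf1, hf2⟩ := Submodule.exists_dual_map_eq_bot_of_notMem hnot inferInstance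
    refine ⟨fun j => (f (γq k))⁻¹ * f (fun j' => if j = j' then 1 else 0), fun i => ?_⟩
    have key : ∑ j, γq i j * ((f (γq k))⁻¹ * f (fun j' => if j = j' then 1 else 0))
        = (f (γq k))⁻¹ * f (γq i) := by
      rw [dual_apply f (γq i), Finset.mul_sum]
      exact Finset.sum_congr rfl fun j _ => by ring
    rw [key]
    by_cases hik : i = k
    · subst hik; simp [inv_mul_cancel₀ hf1]
    · have : f (γq i) = 0 := by
        have hmem : γq i ∈ Submodule.span ℚ (γq '' {i' | i' ≠ k}) :=
          Submodule.subset_span ⟨i, hik, rfl⟩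
        have h3 : f (γq i) ∈ (⊥ : Submodule ℚ ℚ) := hf2 ▸ Submodule.mem_map_of_mem hmem
        simpa using h3
      simp [this, hik]
  choose v hv using hchoice
  exact ⟨v, fun i k => hv k i⟩

lemma exists_int_mul {r : ℕ} (v : Fin r → ℚ) :
    ∃ (M : ℕ) (β : Fin r → ℤ), 0 < M ∧ ∀ j, (β j : ℚ) = M * v j := by
  refine ⟨∏ j, (v j).den, fun j => (v j).num * (((∏ j', (v j').den) / (v j).den : ℕ) : ℤ),
    Finset.prod_pos (fun j _ => (v j).pos), fun j => ?_⟩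
  obtain ⟨c, hc⟩ := Finset.dvd_prod_of_mem (fun j => (v j).den) (Finset.mem_univ j)
  beta_reduce
  rw [hc, Nat.mul_div_cancel_left _ (v j).pos]
  have hden : ((v j).den : ℚ) ≠ 0 := Nat.cast_ne_zero.mpr (v j).den_nz
  have hd : ((v j).den : ℚ) * v j = (v j).num := Rat.den_mul_eq_num (v j)
  push_cast
  rw [mul_comm ((v j).den : ℚ) (c : ℚ), mul_assoc, hd]
  ring

lemma zpow_finset_sum {ι : Type*} {c : ℂ} (hc : c ≠ 0) (s : Finset ι) (f : ι → ℤ) :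
    c ^ (∑ j ∈ s, f j) = ∏ j ∈ s, c ^ f j := by
  induction s using Finset.cons_induction with
  | empty => simp
  | cons a s ha ih => rw [Finset.sum_cons, Finset.prod_cons, zpow_add₀ hc, ih]

lemma mtheta_shift_formula (q : ℝ) (hq0 : 0 < q) (hq1 : q < 1) {r m : ℕ}
    (δ : Fin m → ℕ) (γ : Fin m → Fin r → ℤ) (z t : Fin m → ℚ) (ht : ∀ i, 0 < t i)
    (k : Fin m) (α : Fin r → ℤ) (n : ℕ) (hn : 0 < n)
    (hα : ∀ i, ((∑ j, α j * γ i j : ℤ) : ℚ) = if i = k then (n : ℚ) * t k else 0)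
    (a : Fin r → ℂ) (ha : ∀ j, a j ≠ 0) :
    mtheta q δ γ z t (fun j => a j * ((q:ℂ)) ^ (α j))
      = (-1 : ℂ) ^ ((n * (1 + δ k)) % 2) * (∏ j, a j ^ (-(((n:ℤ) * γ k j))))
        * ((q ^ (-((((n:ℚ) * z k + ((n*(n-1)/2 : ℕ) : ℚ) * t k : ℚ)) : ℝ)) : ℝ) : ℂ)
        * mtheta q δ γ z t a := by
  set c : ℕ := n*(n-1)/2 with hc
  have hqc : (q:ℂ) ≠ 0 := ofReal_ne_zero.mpr (ne_of_gt hq0)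
  set P : Fin m → ℂ := fun i => ∏ j, a j ^ (γ i j) with hPdef
  set cz : Fin m → ℂ := fun i => ((q ^ ((z i : ℝ)) : ℝ) : ℂ) with hczdef
  set cQ : Fin m → ℂ := fun i => ((q ^ ((t i : ℝ)) : ℝ) : ℂ) with hcQdef
  have hP : ∀ i, P i ≠ 0 := fun i => Finset.prod_ne_zero_iff.mpr fun j _ => zpow_ne_zero _ (ha j)
  have hcz : ∀ i, cz i ≠ 0 := fun i =>
    ofReal_ne_zero.mpr (ne_of_gt (Real.rpow_pos_of_pos hq0 _))
  have hcQpos : ∀ i, (0:ℝ) < q ^ ((t i : ℝ)) := fun i => Real.rpow_pos_of_pos hq0 _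
  have hcQ : ∀ i, cQ i ≠ 0 := fun i => ofReal_ne_zero.mpr (ne_of_gt (hcQpos i))
  have hcQlt : ∀ i, ‖cQ i‖ < 1 := by
    intro i
    have h1 : q ^ ((t i : ℝ)) < 1 :=
      Real.rpow_lt_one hq0.le hq1 (by exact_mod_cast ht i)
    simp only [hcQdef, Complex.norm_real]
    rw [Real.norm_eq_abs, abs_of_pos (hcQpos i)]
    exact h1
  set X : Fin m → ℂ := fun i => (-1 : ℂ) ^ (δ i) * P i * cz i with hXdef
  have hX : ∀ i, X i ≠ 0 := fun i =>
    mul_ne_zero (mul_ne_zero (pow_ne_zero _ (by norm_num)) (hP i)) (hcz i)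
  set C : ℂ := (-1)^n * ((X k)⁻¹)^n * ((cQ k)⁻¹)^c with hCdef
  have hprod : ∀ i, (∏ j, (a j * (q:ℂ) ^ (α j)) ^ (γ i j))
      = P i * (q:ℂ) ^ (∑ j, α j * γ i j) := by
    intro i
    rw [zpow_finset_sum hqc, ← Finset.prod_mul_distrib]
    exact Finset.prod_congr rfl fun j _ => by rw [mul_zpow, ← zpow_mul]
  have hSk : (q:ℂ) ^ (∑ j, α j * γ k j) = (cQ k) ^ n := by
    have h1 : ((∑ j, α j * γ k j : ℤ) : ℝ) = (n:ℝ) * ((t k : ℝ)) := by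
      have := hα k
      rw [if_pos rfl] at this
      exact_mod_cast congrArg (fun x : ℚ => (x : ℝ)) this
    have h2 : q ^ (∑ j, α j * γ k j : ℤ) = (q ^ ((t k : ℝ))) ^ n := by
      rw [← Real.rpow_intCast q, h1, mul_comm, Real.rpow_mul hq0.le, Real.rpow_natCast]
    rw [show ((q:ℂ)) ^ (∑ j, α j * γ k j : ℤ) = ((q ^ (∑ j, α j * γ k j : ℤ) : ℝ) : ℂ) by
      push_cast; ring, h2]
    push_cast
    ring
  have step1 : mtheta q δ γ z t (fun j => a j * ((q:ℂ)) ^ (α j)) = C * mtheta q δ γ z t a := by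
    unfold mtheta
    have hfac : ∀ i ∈ Finset.univ, theta ((-1 : ℂ) ^ (δ i) *
        (∏ j, ((a j * (q:ℂ) ^ (α j))) ^ (γ i j)) * cz i) (cQ i)
        = (if i = k then C else 1) * theta (X i) (cQ i) := by
      intro i _
      rw [hprod i]
      by_cases hik : i = k
      · subst hik
        rw [if_pos rfl, hSk]
        rw [show (-1 : ℂ) ^ (δ i) * (P i * cQ i ^ n) * cz i = cQ i ^ n * X i by
          rw [hXdef]; ring]
        rw [theta_pow n (hcQlt i) (hcQ i) (hX i), hCdef]
      · have h0 : (∑ j, α j * γ i j : ℤ) = 0 := by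
          have := hα i
          rw [if_neg hik] at this
          exact_mod_cast this
        rw [h0, zpow_zero, mul_one, if_neg hik, one_mul]
    rw [Finset.prod_congr rfl hfac, Finset.prod_mul_distrib,
      Finset.prod_ite_eq' Finset.univ k (fun _ => C), if_pos (Finset.mem_univ k)]
  rw [step1]
  congr 1
  -- C = prefactor
  have hinv : ((-1:ℂ) ^ (δ k))⁻¹ = (-1:ℂ) ^ (δ k) := by
    rcases Nat.even_or_odd (δ k) with h | h
    · rw [h.neg_one_pow]; norm_num
    · rw [h.neg_one_pow]; norm_num
  have h1 : ((X k)⁻¹)^n = ((-1:ℂ) ^ (δ k))^n * ((P k)⁻¹)^n * ((cz k)⁻¹)^n := by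
    rw [hXdef]
    simp only [mul_inv, hinv, mul_pow]
  have h2 : (∏ j, a j ^ (-(((n:ℤ) * γ k j)))) = ((P k)⁻¹)^n := by
    have : ∀ j, a j ^ (-(((n:ℤ) * γ k j))) = (a j ^ (γ k j)) ^ (-(n:ℤ)) := by
      intro j
      rw [← zpow_mul]
      congr 1
      ring
    rw [Finset.prod_congr rfl (fun j _ => this j), Finset.prod_zpow, zpow_neg, zpow_natCast,
      inv_pow]
  have h3 : (-1:ℂ)^n * ((-1:ℂ) ^ (δ k))^n = (-1 : ℂ) ^ ((n * (1 + δ k)) % 2) := by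
    rw [← neg_one_pow_eq_pow_mod_two, Nat.mul_add, mul_one, pow_add, pow_mul']
  have hr : ((q ^ ((z k : ℝ)))⁻¹)^n * ((q ^ ((t k : ℝ)))⁻¹)^c
      = q ^ (-((((n:ℚ) * z k + ((c : ℕ) : ℚ) * t k : ℚ)) : ℝ)) := by
    rw [← Real.rpow_neg hq0.le, ← Real.rpow_neg hq0.le,
      ← Real.rpow_natCast (q ^ (-((z k : ℝ)))) n, ← Real.rpow_natCast (q ^ (-((t k : ℝ)))) c,
      ← Real.rpow_mul hq0.le, ← Real.rpow_mul hq0.le, ← Real.rpow_add hq0]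
    congr 1
    push_cast
    ring
  have h4 : ((cz k)⁻¹)^n * ((cQ k)⁻¹)^c
      = ((q ^ (-((((n:ℚ) * z k + ((c : ℕ) : ℚ) * t k : ℚ)) : ℝ)) : ℝ) : ℂ) := by
    rw [hczdef, hcQdef]
    rw [← ofReal_inv, ← ofReal_inv, ← ofReal_pow, ← ofReal_pow, ← ofReal_mul, hr]
  rw [hCdef, h1, h2, ← h3, ← h4]
  ring

lemma exists_nonvanishing (q : ℝ) (hq0 : 0 < q) {r m : ℕ}
    (δ : Fin m → ℕ) (γ : Fin m → Fin r → ℤ) (z t : Fin m → ℚ)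
    (v : Fin m → Fin r → ℚ)
    (hv : ∀ i k, (∑ j, (γ i j : ℚ) * v k j) = if i = k then 1 else 0) :
    ∃ a : Fin r → ℂ, (∀ j, a j ≠ 0) ∧ mtheta q δ γ z t a ≠ 0 := by
  classical
  set L : Fin m → ℂ := fun i =>
    ((-(z i : ℝ) * Real.log q : ℝ) : ℂ) + ((1 + δ i : ℕ) : ℂ) * (Real.pi : ℂ) * I with hLdef
  set u : Fin r → ℂ := fun j => ∑ i, L i * ((v i j : ℚ) : ℂ) with hudef
  refine ⟨fun j => Complex.exp (u j), fun j => Complex.exp_ne_zero _, ?_⟩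
  have hsum : ∀ i, (∑ j, (γ i j : ℂ) * u j) = L i := by
    intro i
    have hswap : (∑ j, (γ i j : ℂ) * u j)
        = ∑ k, L k * ∑ j, (γ i j : ℂ) * ((v k j : ℚ) : ℂ) := by
      simp only [hudef, Finset.mul_sum, Finset.sum_mul]
      rw [Finset.sum_comm]
      exact Finset.sum_congr rfl fun k _ => Finset.sum_congr rfl fun j _ => by ring
    rw [hswap]
    have hvc : ∀ k, (∑ j, (γ i j : ℂ) * ((v k j : ℚ) : ℂ)) = if i = k then 1 else 0 := by
      intro k
      have := hv i k
      have hcast := congrArg (fun x : ℚ => (x : ℂ)) this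
      push_cast at hcast
      rw [hcast]
      split <;> norm_num
    calc (∑ k, L k * ∑ j, (γ i j : ℂ) * ((v k j : ℚ) : ℂ))
        = ∑ k, L k * (if i = k then 1 else 0) := by
          exact Finset.sum_congr rfl fun k _ => by rw [hvc k]
      _ = L i := by simp
  have hP : ∀ i, (∏ j, Complex.exp (u j) ^ (γ i j)) = Complex.exp (L i) := by
    intro i
    have : ∀ j, Complex.exp (u j) ^ (γ i j) = Complex.exp ((γ i j : ℂ) * u j) :=
      fun j => (Complex.exp_int_mul (u j) (γ i j)).symm
    rw [Finset.prod_congr rfl fun j _ => this j, ← Complex.exp_sum, hsum]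
  have hexpL : ∀ i, Complex.exp (L i)
      = (-1 : ℂ) ^ (1 + δ i) * ((q ^ (-(z i : ℝ)) : ℝ) : ℂ) := by
    intro i
    rw [hLdef]
    simp only []
    rw [Complex.exp_add]
    have e1 : Complex.exp (((-(z i : ℝ) * Real.log q : ℝ) : ℂ))
        = ((q ^ (-(z i : ℝ)) : ℝ) : ℂ) := by
      rw [← Complex.ofReal_exp]
      congr 1
      rw [Real.rpow_def_of_pos hq0, mul_comm]
    have e2 : Complex.exp (((1 + δ i : ℕ) : ℂ) * (Real.pi : ℂ) * I)
        = (-1 : ℂ) ^ (1 + δ i) := by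
      rw [mul_assoc, Complex.exp_nat_mul, Complex.exp_pi_mul_I]
    rw [e1, e2]
    ring
  have hX : ∀ i, (-1 : ℂ) ^ (δ i) * (∏ j, Complex.exp (u j) ^ (γ i j))
      * ((q ^ ((z i : ℝ)) : ℝ) : ℂ) = -1 := by
    intro i
    rw [hP i, hexpL i]
    have hqz : ((q ^ (-(z i : ℝ)) : ℝ) : ℂ) * ((q ^ ((z i : ℝ)) : ℝ) : ℂ) = 1 := by
      rw [← ofReal_mul, ← Real.rpow_add hq0, neg_add_cancel, Real.rpow_zero, ofReal_one]
    calc (-1 : ℂ) ^ (δ i) * ((-1 : ℂ) ^ (1 + δ i) * ((q ^ (-(z i : ℝ)) : ℝ) : ℂ))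
        * ((q ^ ((z i : ℝ)) : ℝ) : ℂ)
        = ((-1 : ℂ) ^ (δ i) * (-1 : ℂ) ^ (δ i)) * (-1)
          * (((q ^ (-(z i : ℝ)) : ℝ) : ℂ) * ((q ^ ((z i : ℝ)) : ℝ) : ℂ)) := by
          rw [pow_add]; ring
      _ = -1 := by rw [← pow_add, ← two_mul, pow_mul, neg_one_sq, one_pow, hqz]; ring
  unfold mtheta
  apply Finset.prod_ne_zero_iff.mpr
  intro i _
  rw [hX i]
  exact theta_neg_one_ne_zero (Real.rpow_pos_of_pos hq0 _).le

lemma mtheta_congr (q : ℝ) {r m : ℕ} (δ : Fin m → ℕ) (γ : Fin m → Fin r → ℤ)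
    (z t : Fin m → ℚ) {a b : Fin r → ℂ}
    (h : ∀ i, (∏ j, a j ^ (γ i j)) = ∏ j, b j ^ (γ i j)) :
    mtheta q δ γ z t a = mtheta q δ γ z t b :=
  Finset.prod_congr rfl fun i _ => by rw [h i]

lemma prod_scale {r : ℕ} (a : Fin r → ℂ) {c : ℂ} (hc : c ≠ 0) (e g : Fin r → ℤ) :
    ∏ j, (a j * c ^ (e j)) ^ (g j) = (∏ j, a j ^ (g j)) * c ^ (∑ j, e j * g j) := by
  rw [zpow_finset_sum hc, ← Finset.prod_mul_distrib]
  exact Finset.prod_congr rfl fun j _ => by rw [mul_zpow, ← zpow_mul]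

lemma mem_span_of_relation (q : ℝ) (hq0 : 0 < q) (hq1 : q < 1) {r m : ℕ}
    (δ : Fin m → ℕ) (γ : Fin m → Fin r → ℤ)
    (hγ : LinearIndependent ℚ (fun i => fun j => (γ i j : ℚ)))
    (z t : Fin m → ℚ)
    (w : Fin r → ℤ) (α : Fin r → ℤ) (ρ : ℕ) (s : ℚ)
    (hrel : ∀ a : Fin r → ℂ, (∀ j, a j ≠ 0) →
      mtheta q δ γ z t (fun j => a j * ((q : ℂ) ^ (α j)))
        = (-1 : ℂ) ^ ρ * (∏ j, a j ^ (-(w j)))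
            * ((q ^ (-(s : ℝ)) : ℝ) : ℂ) * mtheta q δ γ z t a) :
    (fun j => (w j : ℚ)) ∈
      Submodule.span ℚ (Set.range (fun i => fun j => (γ i j : ℚ))) := by
  classical
  by_contra hw
  obtain ⟨f, hf1, hf2⟩ := Submodule.exists_dual_map_eq_bot_of_notMem hw inferInstance
  set v' : Fin r → ℚ := fun j => f (fun j' => if j = j' then 1 else 0) with hv'def
  have hfx : ∀ x : Fin r → ℚ, f x = ∑ j, x j * v' j := fun x => dual_apply f x
  obtain ⟨M, β, hM, hβ⟩ := exists_int_mul v'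
  have hfker : ∀ i, f (fun j => (γ i j : ℚ)) = 0 := by
    intro i
    have hmem : (fun j => (γ i j : ℚ)) ∈
        Submodule.span ℚ (Set.range (fun i => fun j => (γ i j : ℚ))) :=
      Submodule.subset_span ⟨i, rfl⟩
    have h3 : f (fun j => (γ i j : ℚ)) ∈ (⊥ : Submodule ℚ ℚ) :=
      hf2 ▸ Submodule.mem_map_of_mem hmem
    simpa using h3
  have hβγ : ∀ i, (∑ j, β j * γ i j : ℤ) = 0 := by
    intro i
    have : ((∑ j, β j * γ i j : ℤ) : ℚ) = 0 := by
      push_cast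
      rw [show (∑ j, (β j : ℚ) * (γ i j : ℚ)) = M * ∑ j, (γ i j : ℚ) * v' j by
        rw [Finset.mul_sum]; exact Finset.sum_congr rfl fun j _ => by rw [hβ j]; ring]
      rw [← hfx (fun j => (γ i j : ℚ))]
      · rw [hfker i, mul_zero]
    exact_mod_cast this
  have hwβ : (∑ j, w j * β j : ℤ) ≠ 0 := by
    intro h0
    have : ((∑ j, w j * β j : ℤ) : ℚ) = M * f (fun j => (w j : ℚ)) := by
      push_cast
      rw [hfx (fun j => (w j : ℚ)), Finset.mul_sum]
      exact Finset.sum_congr rfl fun j _ => by rw [hβ j]; ring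
    rw [h0] at this
    have hMne : (M : ℚ) ≠ 0 := Nat.cast_ne_zero.mpr hM.ne'
    have := (mul_eq_zero.mp this.symm).resolve_left hMne
    exact hf1 this
  obtain ⟨v, hv⟩ := exists_dual_system (fun i => fun j => (γ i j : ℚ)) hγ
  obtain ⟨a, ha, hane⟩ := exists_nonvanishing q hq0 δ γ z t v hv
  have ha2 : ∀ j, a j * (2:ℂ) ^ (β j) ≠ 0 :=
    fun j => mul_ne_zero (ha j) (zpow_ne_zero _ two_ne_zero)
  have e1 := hrel a ha
  have e2 := hrel (fun j => a j * (2:ℂ) ^ (β j)) ha2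
  have hqc : (q:ℂ) ≠ 0 := ofReal_ne_zero.mpr (ne_of_gt hq0)
  -- LHS of e2 = LHS of e1
  have hLHS : mtheta q δ γ z t (fun j => (a j * (2:ℂ) ^ (β j)) * ((q : ℂ) ^ (α j)))
      = mtheta q δ γ z t (fun j => a j * ((q : ℂ) ^ (α j))) := by
    apply mtheta_congr
    intro i
    have h1 : ∀ j, (a j * (2:ℂ) ^ (β j)) * ((q : ℂ) ^ (α j))
        = (a j * ((q : ℂ) ^ (α j))) * (2:ℂ) ^ (β j) := fun j => by ring
    rw [Finset.prod_congr rfl fun j _ => by rw [h1 j]]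
    rw [prod_scale _ two_ne_zero β (γ i), hβγ i, zpow_zero, mul_one]
  -- mtheta at scaled a
  have hM2 : mtheta q δ γ z t (fun j => a j * (2:ℂ) ^ (β j)) = mtheta q δ γ z t a := by
    apply mtheta_congr
    intro i
    rw [prod_scale _ two_ne_zero β (γ i), hβγ i, zpow_zero, mul_one]
  rw [hLHS, hM2, e1] at e2
  rw [prod_scale _ two_ne_zero β (fun j => -(w j))] at e2
  set E : ℤ := ∑ j, β j * -(w j) with hEdef
  set X : ℂ := (-1 : ℂ) ^ ρ * (∏ j, a j ^ (-(w j)))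
      * ((q ^ (-(s : ℝ)) : ℝ) : ℂ) * mtheta q δ γ z t a with hXdef
  have hXne : X ≠ 0 := by
    apply mul_ne_zero
    apply mul_ne_zero
    apply mul_ne_zero
    · exact pow_ne_zero _ (by norm_num)
    · exact Finset.prod_ne_zero_iff.mpr fun j _ => zpow_ne_zero _ (ha j)
    · exact ofReal_ne_zero.mpr (ne_of_gt (Real.rpow_pos_of_pos hq0 _))
    · exact hane
  have hE1 : X * (2:ℂ) ^ E = X := by
    conv_rhs => rw [e2]
    rw [hXdef]
    ring
  have hE : (2:ℂ) ^ E = 1 := mul_left_cancel₀ hXne (hE1.trans (mul_one X).symm)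
  have hE' : (2:ℝ) ^ E = 1 := by
    have := congrArg (fun z : ℂ => ‖z‖) hE
    rw [norm_zpow, norm_one] at this
    simpa using this
  have hEzero : E = 0 := by
    have hlog := congrArg Real.log hE'
    rw [Real.log_zpow, Real.log_one] at hlog
    have hl2 : Real.log 2 ≠ 0 := ne_of_gt (Real.log_pos one_lt_two)
    rcases mul_eq_zero.mp hlog with h | h
    · exact_mod_cast h
    · exact absurd h hl2
  apply hwβ
  have : (∑ j, β j * -(w j) : ℤ) = -∑ j, w j * β j := by
    rw [← Finset.sum_neg_distrib]
    exact Finset.sum_congr rfl fun j _ => by ring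
  rw [hEdef, this] at hEzero
  omega

/-- The span `U_θ` of the exponent vectors of the factors of a multiple theta
function equals the span `V_θ` of the exponent vectors of its contiguous
relations. -/
theorem span_factors_eq_span_contiguous (q : ℝ) (hq0 : 0 < q) (hq1 : q < 1)
    (r m : ℕ) (hm : 1 < m) (hmr : m ≤ r)
    (δ : Fin m → ℕ) (hδ : ∀ i, δ i = 0 ∨ δ i = 1)
    (γ : Fin m → Fin r → ℤ)
    (hγ : LinearIndependent ℚ (fun i => fun j => (γ i j : ℚ)))
    (z : Fin m → ℚ) (t : Fin m → ℚ) (ht : ∀ i, 0 < t i) :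
    Submodule.span ℚ (Set.range (fun i => fun j => (γ i j : ℚ)))
      = Submodule.span ℚ {x : Fin r → ℚ | ∃ w : Fin r → ℤ,
          (∀ j, x j = (w j : ℚ)) ∧
          ∃ (α : Fin r → ℤ) (ρ : ℕ), (ρ = 0 ∨ ρ = 1) ∧ ∃ s : ℚ,
            ∀ a : Fin r → ℂ, (∀ j, a j ≠ 0) →
              mtheta q δ γ z t (fun j => a j * ((q : ℂ) ^ (α j)))
                = (-1 : ℂ) ^ ρ * (∏ j, a j ^ (-(w j)))
                    * ((q ^ (-(s : ℝ)) : ℝ) : ℂ) * mtheta q δ γ z t a} := by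
  classical
  obtain ⟨v, hv⟩ := exists_dual_system (fun i => fun j => (γ i j : ℚ)) hγ
  apply le_antisymm
  · rw [Submodule.span_le]
    rintro x ⟨k, rfl⟩
    obtain ⟨M, β, hM, hβ⟩ := exists_int_mul (v k)
    set n : ℕ := M * (t k).den with hndef
    have hn : 0 < n := Nat.mul_pos hM (t k).pos
    set α : Fin r → ℤ := fun j => (t k).num * β j with hαdef
    have hα : ∀ i, ((∑ j, α j * γ i j : ℤ) : ℚ) = if i = k then (n : ℚ) * t k else 0 := by
      intro i
      have hden : ((t k).den : ℚ) * t k = (t k).num := Rat.den_mul_eq_num (t k)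
      have hsum : ((∑ j, α j * γ i j : ℤ) : ℚ)
          = ((t k).num : ℚ) * (M : ℚ) * ∑ j, (γ i j : ℚ) * v k j := by
        simp only [hαdef]
        push_cast
        rw [Finset.mul_sum]
        exact Finset.sum_congr rfl fun j _ => by rw [hβ j]; ring
      rw [hsum, hv i k]
      by_cases hik : i = k
      · rw [if_pos hik, if_pos hik, mul_one, hndef]
        push_cast
        rw [mul_assoc, hden]
        ring
      · rw [if_neg hik, if_neg hik, mul_zero]
    set w : Fin r → ℤ := fun j => (n:ℤ) * γ k j with hwdef
    have hmem : (fun j => ((w j : ℤ) : ℚ)) ∈ {x : Fin r → ℚ | ∃ w : Fin r → ℤ,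
          (∀ j, x j = (w j : ℚ)) ∧
          ∃ (α : Fin r → ℤ) (ρ : ℕ), (ρ = 0 ∨ ρ = 1) ∧ ∃ s : ℚ,
            ∀ a : Fin r → ℂ, (∀ j, a j ≠ 0) →
              mtheta q δ γ z t (fun j => a j * ((q : ℂ) ^ (α j)))
                = (-1 : ℂ) ^ ρ * (∏ j, a j ^ (-(w j)))
                    * ((q ^ (-(s : ℝ)) : ℝ) : ℂ) * mtheta q δ γ z t a} := by
      refine ⟨w, fun j => rfl, α, (n * (1 + δ k)) % 2, by omega,
        (n:ℚ) * z k + ((n*(n-1)/2 : ℕ) : ℚ) * t k, fun a ha => ?_⟩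
      exact mtheta_shift_formula q hq0 hq1 δ γ z t ht k α n hn hα a ha
    have hsmul : (fun j => (γ k j : ℚ)) = (n : ℚ)⁻¹ • (fun j => ((w j : ℤ) : ℚ)) := by
      funext j
      rw [hwdef]
      have hnne : (n : ℚ) ≠ 0 := Nat.cast_ne_zero.mpr hn.ne'
      push_cast
      simp only [Pi.smul_apply, smul_eq_mul]
      field_simp
    show (fun j => (γ k j : ℚ)) ∈ _
    rw [hsmul]
    exact Submodule.smul_mem _ _ (Submodule.subset_span hmem)
  · rw [Submodule.span_le]
    rintro x ⟨w, hxw, α, ρ, hρ, s, hrel⟩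
    have hx : x = fun j => (w j : ℚ) := funext hxw
    rw [hx]
    exact mem_span_of_relation q hq0 hq1 δ γ hγ z t w α ρ s hrel
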